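/- arXiv:2506.15905 — 10 statements merged into one kernel-verified Lean document; each statement's English description precedes it below -/
import Mathlib

section
/- Let ι be a finite index type and x : ι → ℤ a family of integers each equal to 0 or 1. Then the Boolean XOR of the family (i.e., the element of {0,1} ⊂ ℤ equal to 1 exactly when an odd number of the x i equal 1) satisfies the inclusion–exclusion identity: XOR_{i} x i = ∑_{S ⊆ ι, S ≠ ∅} (−1)^{|S|+1} · 2^{|S|−1} · ∏_{i ∈ S} x i. -/
/-- **Inclusion–exclusion identity for the XOR of a family of bits.**
Bits are integers equal to 0 or 1; the XOR of the family is 1 exactly when an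
odd number of the `x i` equal 1.  Then
`XOR_i x i = ∑_{∅ ≠ S ⊆ ι} (−1)^{|S|+1} 2^{|S|−1} ∏_{i∈S} x i`. -/
theorem xor_inclusion_exclusion {ι : Type*} [Fintype ι] [DecidableEq ι]
    (x : ι → ℤ) (hx : ∀ i, x i = 0 ∨ x i = 1) :
    (if Odd (Finset.univ.filter (fun i => x i = 1)).card then (1 : ℤ) else 0) =
      ∑ S ∈ Finset.univ.powerset.filter (fun S : Finset ι => S ≠ ∅),
        (-1 : ℤ) ^ (S.card + 1) * 2 ^ (S.card - 1) * ∏ i ∈ S, x i := by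
  set T := Finset.univ.filter (fun i => x i = 1) with hT
  set A := ∑ S ∈ Finset.univ.powerset.filter (fun S : Finset ι => S ≠ ∅),
        (-1 : ℤ) ^ (S.card + 1) * 2 ^ (S.card - 1) * ∏ i ∈ S, x i with hA
  -- the signed product
  have hprod : ∏ i, (1 - 2 * x i) = (-1 : ℤ) ^ T.card := by
    rw [← Finset.prod_filter_mul_prod_filter_not Finset.univ (fun i => x i = 1)]
    have h1 : ∏ i ∈ T, (1 - 2 * x i) = (-1 : ℤ) ^ T.card := by
      rw [Finset.prod_congr rfl (fun i hi => ?_), Finset.prod_const]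
      have : x i = 1 := (Finset.mem_filter.mp hi).2
      rw [this]; ring
    have h2 : ∏ i ∈ Finset.univ.filter (fun i => ¬ x i = 1), (1 - 2 * x i) = 1 := by
      apply Finset.prod_eq_one
      intro i hi
      have h := (Finset.mem_filter.mp hi).2
      rcases hx i with h0 | h1
      · rw [h0]; ring
      · exact absurd h1 h
    rw [h1, h2, mul_one]
  -- expansion
  have hexp : ∏ i, (1 - 2 * x i) = 1 + (-2) * A := by
    have : ∀ i : ι, (1 - 2 * x i) = (-2) * x i + 1 := fun i => by ring
    rw [Finset.prod_congr rfl (fun i _ => this i), Finset.prod_add]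
    have : ∀ t ∈ Finset.univ.powerset,
        (∏ i ∈ t, (-2) * x i) * (∏ i ∈ (Finset.univ : Finset ι) \ t, (1 : ℤ))
          = (-2 : ℤ) ^ t.card * ∏ i ∈ t, x i := by
      intro t _
      rw [Finset.prod_const, Finset.prod_mul_distrib, Finset.prod_const, one_pow, mul_one]
    rw [Finset.sum_congr rfl this]
    rw [← Finset.sum_filter_add_sum_filter_not Finset.univ.powerset
      (fun S : Finset ι => S ≠ ∅)]
    have hne : Finset.univ.powerset.filter (fun S : Finset ι => ¬ S ≠ ∅) = {∅} := by
      ext S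
      simp [Finset.mem_filter]
    rw [hne, Finset.sum_singleton]
    simp only [Finset.card_empty, pow_zero, Finset.prod_empty, mul_one]
    rw [hA, Finset.mul_sum]
    have : ∀ S ∈ Finset.univ.powerset.filter (fun S : Finset ι => S ≠ ∅),
        (-2 : ℤ) ^ S.card * ∏ i ∈ S, x i
          = (-2) * ((-1 : ℤ) ^ (S.card + 1) * 2 ^ (S.card - 1) * ∏ i ∈ S, x i) := by
      intro S hS
      have hSne : S ≠ ∅ := (Finset.mem_filter.mp hS).2
      have hc : 1 ≤ S.card := Finset.card_pos.mpr (Finset.nonempty_of_ne_empty hSne)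
      obtain ⟨k, hk⟩ := Nat.exists_eq_add_of_le hc
      rw [hk]
      simp only [Nat.add_sub_cancel_left, Nat.add_sub_cancel]
      rw [show (-2 : ℤ) = (-1) * 2 by ring, mul_pow]
      ring
    rw [Finset.sum_congr rfl this]
    ring
  -- 2 * LHS = 1 - (-1)^|T|
  have key : 2 * (if Odd T.card then (1 : ℤ) else 0) = 2 * A := by
    have h2A : (2 : ℤ) * A = 1 - (-1) ^ T.card := by
      rw [← hprod, hexp]; ring
    rw [h2A]
    by_cases h : Odd T.card
    · rw [if_pos h, h.neg_one_pow]; ring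
    · rw [if_neg h, (Nat.not_odd_iff_even.mp h).neg_one_pow]; ring
  exact mul_left_cancel₀ (by norm_num) key
end

section
/- Let q ≥ 1, let n and m be natural numbers, let x : Fin m → Fin n → ℤ be a family of vectors with all entries equal to 0 or 1, and let p : Fin n → ℤ. Denote by ⊕x the coordinatewise XOR of the rows x₀,…,x_{m−1} (a 0/1 vector). Then ∑_{c} (⊕x)(c) · p(c) ≡ ∑_{S ⊆ Fin m, 1 ≤ |S| ≤ q} (−1)^{|S|+1} · 2^{|S|−1} · ∑_{c} (∏_{i∈S} x i c) · p(c) (mod 2^q); that is, to evaluate the p-weighted weight of an XOR of rows modulo 2^q, only the terms of the inclusion–exclusion expansion of order at most q are needed. -/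
open Finset

lemma sum_pow_powerset {α : Type*} [DecidableEq α] (A : Finset α) (r : ℤ) :
    ∑ S ∈ A.powerset, r ^ S.card = (r + 1) ^ A.card := by
  induction A using Finset.induction with
  | empty => simp
  | @insert a s ha ih =>
    rw [Finset.sum_powerset_insert ha, ih, Finset.card_insert_of_notMem ha]
    have : ∑ S ∈ s.powerset, r ^ (insert a S).card
        = ∑ S ∈ s.powerset, r * r ^ S.card := by
      refine Finset.sum_congr rfl fun S hS => ?_
      rw [Finset.card_insert_of_notMem fun h => ha (Finset.mem_powerset.1 hS h), pow_succ']
    rw [this, ← Finset.mul_sum, ih]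
    ring

lemma parity_expand (m : ℕ) (v : Fin m → ℤ) (hv : ∀ i, v i = 0 ∨ v i = 1) :
    (if Odd (Finset.univ.filter (fun i => v i = 1)).card then (1 : ℤ) else 0)
      = ∑ S ∈ Finset.univ.powerset.filter (fun S : Finset (Fin m) => 1 ≤ S.card),
          (-1 : ℤ) ^ (S.card + 1) * 2 ^ (S.card - 1) * ∏ i ∈ S, v i := by
  classical
  set A := Finset.univ.filter (fun i => v i = 1) with hA
  have hprod : ∀ S : Finset (Fin m), (∏ i ∈ S, v i) = if S ⊆ A then 1 else 0 := by
    intro S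
    by_cases h : S ⊆ A
    · rw [if_pos h]
      refine Finset.prod_eq_one fun i hi => ?_
      have := h hi; rw [hA, Finset.mem_filter] at this; exact this.2
    · rw [if_neg h]
      obtain ⟨i, hiS, hiA⟩ := Finset.not_subset.1 h
      have : v i = 0 := by
        rcases hv i with h0 | h1
        · exact h0
        · exact absurd (Finset.mem_filter.2 ⟨Finset.mem_univ i, h1⟩) hiA
      exact Finset.prod_eq_zero hiS this
  have hrestrict :
      ∑ S ∈ Finset.univ.powerset.filter (fun S : Finset (Fin m) => 1 ≤ S.card),
          (-1 : ℤ) ^ (S.card + 1) * 2 ^ (S.card - 1) * ∏ i ∈ S, v i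
      = ∑ S ∈ A.powerset.filter (fun S => 1 ≤ S.card),
          (-1 : ℤ) ^ (S.card + 1) * 2 ^ (S.card - 1) := by
    rw [← Finset.sum_subset (Finset.filter_subset_filter _
        (Finset.powerset_mono.2 (Finset.subset_univ A)))]
    · refine Finset.sum_congr rfl fun S hS => ?_
      rw [hprod S, if_pos (Finset.mem_powerset.1 (Finset.mem_filter.1 hS).1), mul_one]
    · intro S hS hS'
      have : ¬ S ⊆ A := by
        intro h
        exact hS' (Finset.mem_filter.2 ⟨Finset.mem_powerset.2 h, (Finset.mem_filter.1 hS).2⟩)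
      rw [hprod S, if_neg this, mul_zero]
  rw [hrestrict]
  -- multiply by 2
  have h2 : (2 : ℤ) * (∑ S ∈ A.powerset.filter (fun S => 1 ≤ S.card),
      (-1 : ℤ) ^ (S.card + 1) * 2 ^ (S.card - 1)) = 1 - (-1) ^ A.card := by
    rw [Finset.mul_sum]
    have : ∀ S ∈ A.powerset.filter (fun S => 1 ≤ S.card),
        (2 : ℤ) * ((-1) ^ (S.card + 1) * 2 ^ (S.card - 1)) = -(-2 : ℤ) ^ S.card := by
      intro S hS
      have h1 : 1 ≤ S.card := (Finset.mem_filter.1 hS).2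
      obtain ⟨k, hk⟩ := Nat.exists_eq_add_of_le h1
      rw [hk, Nat.add_sub_cancel_left, neg_pow (2:ℤ)]
      ring
    rw [Finset.sum_congr rfl this, Finset.sum_neg_distrib]
    have hsplit : ∑ S ∈ A.powerset, (-2 : ℤ) ^ S.card
        = (-2 : ℤ) ^ (∅ : Finset (Fin m)).card
          + ∑ S ∈ A.powerset.filter (fun S => 1 ≤ S.card), (-2 : ℤ) ^ S.card := by
      rw [← Finset.sum_filter_add_sum_filter_not A.powerset (fun S => 1 ≤ S.card)]
      rw [add_comm]
      congr 1
      have : A.powerset.filter (fun S => ¬ 1 ≤ S.card) = {∅} := by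
        ext S
        simp only [Finset.mem_filter, Finset.mem_powerset, Finset.mem_singleton, not_le,
          Nat.lt_one_iff, Finset.card_eq_zero]
        constructor
        · rintro ⟨_, h⟩; exact h
        · rintro rfl; exact ⟨Finset.empty_subset _, rfl⟩
      rw [this, Finset.sum_singleton]
    have := sum_pow_powerset A (-2 : ℤ)
    rw [hsplit] at this
    simp only [Finset.card_empty, pow_zero] at this
    have heq : ∑ S ∈ A.powerset.filter (fun S => 1 ≤ S.card), (-2 : ℤ) ^ S.card
        = (-1 : ℤ) ^ A.card - 1 := by
      rw [show ((-2:ℤ)+1) = -1 by norm_num] at this; linarith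
    rw [heq]; ring
  have h2' : (2 : ℤ) * (if Odd A.card then (1 : ℤ) else 0) = 1 - (-1) ^ A.card := by
    by_cases h : Odd A.card
    · rw [if_pos h, Odd.neg_one_pow h]; ring
    · rw [if_neg h, Even.neg_one_pow (Nat.not_odd_iff_even.1 h)]; ring
  have := h2'.trans h2.symm
  exact mul_left_cancel₀ (by norm_num : (2:ℤ) ≠ 0) this

/-- **Truncated inclusion–exclusion for the weighted weight of an XOR of rows, mod `2^q`.**
The rows `x i : Fin n → ℤ` are bit strings (entries 0 or 1); `⊕x` is their coordinatewise
XOR.  Then `∑_c (⊕x)(c)·p(c)` is congruent, modulo `2^q`, to the inclusion–exclusion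
expansion truncated at subsets of size at most `q`. -/
theorem xor_weight_modEq_truncated_expansion
    (q m n : ℕ) (hq : 1 ≤ q)
    (x : Fin m → Fin n → ℤ) (hx : ∀ i c, x i c = 0 ∨ x i c = 1)
    (p : Fin n → ℤ) :
    (∑ c, (if Odd (Finset.univ.filter (fun i => x i c = 1)).card then (1 : ℤ) else 0) * p c)
      ≡
    (∑ S ∈ Finset.univ.powerset.filter
        (fun S : Finset (Fin m) => 1 ≤ S.card ∧ S.card ≤ q),
      (-1 : ℤ) ^ (S.card + 1) * 2 ^ (S.card - 1) * ∑ c, (∏ i ∈ S, x i c) * p c)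
      [ZMOD (2 : ℤ) ^ q] := by
  classical
  have hfull :
      (∑ c, (if Odd (Finset.univ.filter (fun i => x i c = 1)).card then (1 : ℤ) else 0) * p c)
      = ∑ S ∈ Finset.univ.powerset.filter (fun S : Finset (Fin m) => 1 ≤ S.card),
          (-1 : ℤ) ^ (S.card + 1) * 2 ^ (S.card - 1) * ∑ c, (∏ i ∈ S, x i c) * p c := by
    have : ∀ c, (if Odd (Finset.univ.filter (fun i => x i c = 1)).card then (1 : ℤ) else 0) * p c
        = ∑ S ∈ Finset.univ.powerset.filter (fun S : Finset (Fin m) => 1 ≤ S.card),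
            (-1 : ℤ) ^ (S.card + 1) * 2 ^ (S.card - 1) * ((∏ i ∈ S, x i c) * p c) := by
      intro c
      rw [parity_expand m (fun i => x i c) (fun i => hx i c), Finset.sum_mul]
      exact Finset.sum_congr rfl fun S _ => by ring
    rw [Finset.sum_congr rfl fun c _ => this c, Finset.sum_comm]
    exact Finset.sum_congr rfl fun S _ => by rw [Finset.mul_sum]
  rw [hfull]
  have hsplit :
      (Finset.univ.powerset.filter (fun S : Finset (Fin m) => 1 ≤ S.card))
      = (Finset.univ.powerset.filter (fun S : Finset (Fin m) => 1 ≤ S.card ∧ S.card ≤ q))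
        ∪ (Finset.univ.powerset.filter (fun S : Finset (Fin m) => 1 ≤ S.card ∧ ¬ S.card ≤ q)) := by
    rw [← Finset.filter_or]
    exact Finset.filter_congr fun S _ => by tauto
  rw [hsplit, Finset.sum_union]
  · have htail : ((2:ℤ)^q) ∣ ∑ S ∈ Finset.univ.powerset.filter
        (fun S : Finset (Fin m) => 1 ≤ S.card ∧ ¬ S.card ≤ q),
        ((-1 : ℤ) ^ (S.card + 1) * 2 ^ (S.card - 1) * ∑ c, (∏ i ∈ S, x i c) * p c) := by
      refine Finset.dvd_sum fun S hS => ?_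
      have hc : q < S.card := not_le.1 (Finset.mem_filter.1 hS).2.2
      exact Dvd.dvd.mul_right (Dvd.dvd.mul_left (pow_dvd_pow 2 (by omega)) _) _
    have h0 : (∑ S ∈ Finset.univ.powerset.filter
        (fun S : Finset (Fin m) => 1 ≤ S.card ∧ ¬ S.card ≤ q),
        ((-1 : ℤ) ^ (S.card + 1) * 2 ^ (S.card - 1) * ∑ c, (∏ i ∈ S, x i c) * p c))
        ≡ 0 [ZMOD (2:ℤ)^q] := Int.modEq_zero_iff_dvd.2 htail
    calc _ ≡ _ + 0 [ZMOD (2:ℤ)^q] := ((Int.ModEq.refl _).add h0)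
      _ = _ := add_zero _
  · rw [Finset.disjoint_filter]
    tauto
end

section
/- (Combinatorial core of Lemma 1: sufficiency of the transversal-phase-gate conditions.) Let q ≥ 1, and let H : Fin m → Fin n → ℤ and L : Fin k → Fin n → ℤ be families of vectors with all entries equal to 0 or 1 (the X-stabilizer generators and logical X generators), let p : Fin n → ℤ and w : Fin k → ℤ. Assume: (a) for every j, ∑_c L j c · p c ≡ w j (mod 2^q); and (b) for all subsets S ⊆ Fin m and T ⊆ Fin k with 1 ≤ |S| + |T| ≤ q and not (S = ∅ and |T| = 1), one has ∑_c (∏_{i∈S} H i c) · (∏_{j∈T} L j c) · p c ≡ 0 (mod 2^{q+1−|S|−|T|}). Then for all subsets S ⊆ Fin m and T ⊆ Fin k, ∑_c ((⊕_{i∈S} H i) ⊕ (⊕_{j∈T} L j))(c) · p c ≡ ∑_{j∈T} w j (mod 2^q), where ⊕ denotes coordinatewise XOR of 0/1 vectors. (This says the physical phase gate P_q^p induces the logical transversal phase gate P_{L,q}^w on every X-basis codeword.) -/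
section aux
variable {m k n : ℕ}

lemma xor_indicator (H : Fin m → Fin n → ℤ) (L : Fin k → Fin n → ℤ)
    (hH : ∀ i c, H i c = 0 ∨ H i c = 1) (hL : ∀ j c, L j c = 0 ∨ L j c = 1)
    (S : Finset (Fin m)) (T : Finset (Fin k)) (c : Fin n) :
    (2:ℤ) * (if Odd ((S.filter (fun i => H i c = 1)).card
                      + (T.filter (fun j => L j c = 1)).card) then (1 : ℤ) else 0)
      = 1 - (∏ i ∈ S, (1 - 2 * H i c)) * (∏ j ∈ T, (1 - 2 * L j c)) := by
  have hS : (∏ i ∈ S, (1 - 2 * H i c))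
      = (-1:ℤ) ^ ((S.filter (fun i => H i c = 1)).card) := by
    rw [Finset.card_filter, ← Finset.prod_pow_eq_pow_sum]
    refine Finset.prod_congr rfl fun i _ => ?_
    rcases hH i c with h | h <;> simp [h]
  have hT : (∏ j ∈ T, (1 - 2 * L j c))
      = (-1:ℤ) ^ ((T.filter (fun j => L j c = 1)).card) := by
    rw [Finset.card_filter, ← Finset.prod_pow_eq_pow_sum]
    refine Finset.prod_congr rfl fun j _ => ?_
    rcases hL j c with h | h <;> simp [h]
  rw [hS, hT, ← pow_add]
  rcases Nat.even_or_odd ((S.filter (fun i => H i c = 1)).card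
      + (T.filter (fun j => L j c = 1)).card) with h | h
  · rw [h.neg_one_pow, if_neg (by simpa [Nat.not_odd_iff_even] using h)]; ring
  · rw [h.neg_one_pow, if_pos h]; ring

end aux

/-- **Sufficiency of the transversal-phase-gate conditions (combinatorial core of Lemma 1).**
`H` are the X-stabilizer generators, `L` the logical X generators (bit strings as 0/1
integer vectors), `p` the physical phase pattern and `w` the target logical phases.
Conditions (a) and (b) imply that every X-basis codeword — the coordinatewise XOR of a
subset `S` of rows of `H` and a subset `T` of rows of `L` — has `p`-weighted weight
congruent to `∑_{j∈T} w j` modulo `2^q`. -/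
theorem transversal_phase_gate_sufficient
    (q m k n : ℕ) (hq : 1 ≤ q)
    (H : Fin m → Fin n → ℤ) (L : Fin k → Fin n → ℤ)
    (hH : ∀ i c, H i c = 0 ∨ H i c = 1) (hL : ∀ j c, L j c = 0 ∨ L j c = 1)
    (p : Fin n → ℤ) (w : Fin k → ℤ)
    (ha : ∀ j, (∑ c, L j c * p c) ≡ w j [ZMOD (2 : ℤ) ^ q])
    (hb : ∀ (S : Finset (Fin m)) (T : Finset (Fin k)),
      1 ≤ S.card + T.card → S.card + T.card ≤ q → ¬(S = ∅ ∧ T.card = 1) →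
      (∑ c, (∏ i ∈ S, H i c) * (∏ j ∈ T, L j c) * p c)
        ≡ 0 [ZMOD (2 : ℤ) ^ (q + 1 - S.card - T.card)]) :
    ∀ (S : Finset (Fin m)) (T : Finset (Fin k)),
      (∑ c, (if Odd ((S.filter (fun i => H i c = 1)).card
                      + (T.filter (fun j => L j c = 1)).card)
              then (1 : ℤ) else 0) * p c)
        ≡ (∑ j ∈ T, w j) [ZMOD (2 : ℤ) ^ q] := by
  intro S T
  -- A(U,V): the weighted monomial sums
  set A : Finset (Fin m) × Finset (Fin k) → ℤ :=
    fun UV => ∑ c, (∏ i ∈ UV.1, H i c) * (∏ j ∈ UV.2, L j c) * p c with hA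
  set P : Finset (Finset (Fin m) × Finset (Fin k)) :=
    (S.powerset ×ˢ T.powerset).erase (∅, ∅) with hP
  -- key identity: 2 * LHS = - ∑ over nontrivial pairs of (-2)^(|U|+|V|) * A(U,V)
  have key : 2 * (∑ c, (if Odd ((S.filter (fun i => H i c = 1)).card
                      + (T.filter (fun j => L j c = 1)).card)
              then (1 : ℤ) else 0) * p c)
      = - ∑ UV ∈ P, (-2:ℤ) ^ (UV.1.card + UV.2.card) * A UV := by
    have expand : ∀ c, (∏ i ∈ S, (1 - 2 * H i c)) * (∏ j ∈ T, (1 - 2 * L j c))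
        = ∑ UV ∈ S.powerset ×ˢ T.powerset,
            (-2:ℤ) ^ (UV.1.card + UV.2.card)
              * ((∏ i ∈ UV.1, H i c) * (∏ j ∈ UV.2, L j c)) := by
      intro c
      have e1 : (∏ i ∈ S, (1 - 2 * H i c))
          = ∑ U ∈ S.powerset, (-2:ℤ) ^ U.card * ∏ i ∈ U, H i c := by
        have : ∀ i, (1 - 2 * H i c) = (-2) * H i c + 1 := fun i => by ring
        simp_rw [this, Finset.prod_add, Finset.prod_const_one, mul_one,
          Finset.prod_mul_distrib, Finset.prod_const]
      have e2 : (∏ j ∈ T, (1 - 2 * L j c))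
          = ∑ V ∈ T.powerset, (-2:ℤ) ^ V.card * ∏ j ∈ V, L j c := by
        have : ∀ j, (1 - 2 * L j c) = (-2) * L j c + 1 := fun j => by ring
        simp_rw [this, Finset.prod_add, Finset.prod_const_one, mul_one,
          Finset.prod_mul_distrib, Finset.prod_const]
      rw [e1, e2, Finset.sum_mul_sum, Finset.sum_product]
      refine Finset.sum_congr rfl fun U _ => Finset.sum_congr rfl fun V _ => ?_
      rw [pow_add]; ring
    calc 2 * (∑ c, (if Odd ((S.filter (fun i => H i c = 1)).card
                      + (T.filter (fun j => L j c = 1)).card)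
              then (1 : ℤ) else 0) * p c)
        = ∑ c, (1 - (∏ i ∈ S, (1 - 2 * H i c)) * (∏ j ∈ T, (1 - 2 * L j c))) * p c := by
          rw [Finset.mul_sum]
          refine Finset.sum_congr rfl fun c _ => ?_
          rw [← mul_assoc, xor_indicator H L hH hL S T c]
      _ = ∑ c, p c - ∑ UV ∈ S.powerset ×ˢ T.powerset,
            (-2:ℤ) ^ (UV.1.card + UV.2.card) * A UV := by
          simp_rw [expand, sub_mul, one_mul, Finset.sum_sub_distrib, Finset.sum_mul,
            Finset.sum_comm (s := Finset.univ)]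
          rw [hA]
          congr 1
          refine Finset.sum_congr rfl fun UV _ => ?_
          rw [Finset.mul_sum]
          refine Finset.sum_congr rfl fun c _ => by ring
      _ = - ∑ UV ∈ P, (-2:ℤ) ^ (UV.1.card + UV.2.card) * A UV := by
          have hmem : ((∅, ∅) : Finset (Fin m) × Finset (Fin k))
              ∈ S.powerset ×ˢ T.powerset := by simp
          rw [← Finset.add_sum_erase _ _ hmem, ← hP]
          simp [hA]
  -- target phase function on pairs
  set B : Finset (Fin m) × Finset (Fin k) → ℤ :=
    fun UV => if UV.1 = ∅ ∧ UV.2.card = 1 then (-2) * ∑ j ∈ UV.2, w j else 0 with hB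
  -- termwise congruence mod 2^(q+1)
  have term : ∀ UV ∈ P, ((2:ℤ) ^ (q+1)) ∣
      ((-2:ℤ) ^ (UV.1.card + UV.2.card) * A UV - B UV) := by
    rintro ⟨U, V⟩ hUV
    rw [hP, Finset.mem_erase, Finset.mem_product, Finset.mem_powerset,
      Finset.mem_powerset] at hUV
    obtain ⟨hne, hU, hV⟩ := hUV
    have hcard : 1 ≤ U.card + V.card := by
      rcases Nat.eq_zero_or_pos (U.card + V.card) with h | h
      · exfalso; apply hne
        have h1 : U = ∅ := Finset.card_eq_zero.mp (by omega)
        have h2 : V = ∅ := Finset.card_eq_zero.mp (by omega)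
        rw [h1, h2]
      · exact h
    by_cases hsmall : U.card + V.card ≤ q
    · by_cases hone : U = ∅ ∧ V.card = 1
      · obtain ⟨hU0, hV1⟩ := hone
        obtain ⟨j, hj⟩ := Finset.card_eq_one.mp hV1
        have hjT : j ∈ T := hV (by simp [hj])
        have hAj : A (U, V) = ∑ c, L j c * p c := by
          simp [hA, hU0, hj]
        have hwj : ((2:ℤ)^q) ∣ ((∑ c, L j c * p c) - w j) := (ha j).symm.dvd
        have hBval : B (U, V) = -2 * w j := by simp [hB, hU0, hj]
        have hs : U.card + V.card = 1 := by simp [hU0, hj]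
        rw [hBval, hs, hAj]
        have heq : (-2:ℤ)^1 * (∑ c, L j c * p c) - (-2)*w j
            = -2 * ((∑ c, L j c * p c) - w j) := by ring
        rw [heq, pow_succ, mul_comm ((2:ℤ)^q) 2]
        exact mul_dvd_mul (by norm_num : (2:ℤ) ∣ -2) hwj
      · have hb' := hb U V hcard hsmall hone
        have hdvd : ((2:ℤ) ^ (q + 1 - U.card - V.card)) ∣ A (U, V) := by
          simpa [hA] using hb'.dvd
        have hBval : B (U, V) = 0 := by simp [hB, hone]
        rw [hBval, sub_zero]
        have hsplit : (2:ℤ) ^ (q+1)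
            = 2 ^ (U.card + V.card) * 2 ^ (q + 1 - U.card - V.card) := by
          rw [← pow_add]; congr 1; omega
        rw [hsplit]
        have heq : (-2:ℤ) ^ (U.card + V.card) * A (U, V)
            = (-1:ℤ)^(U.card+V.card) * (2 ^ (U.card + V.card) * A (U, V)) := by
          rw [neg_pow 2]; ring
        rw [heq]
        exact Dvd.dvd.mul_left (mul_dvd_mul_left _ hdvd) _
    · have hbig : q + 1 ≤ U.card + V.card := by omega
      have hone' : ¬ (U = ∅ ∧ V.card = 1) := by
        rintro ⟨h1, h2⟩
        rw [h1] at hsmall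
        simp [h2] at hsmall
        omega
      have hBval : B (U, V) = 0 := by simp [hB, hone']
      rw [hBval, sub_zero]
      have heq : ((-2:ℤ) ^ (U.card + V.card)) = (-1:ℤ)^(U.card+V.card) * 2^(U.card+V.card) := by
        rw [neg_pow 2]
      rw [heq]
      exact ((pow_dvd_pow 2 hbig).mul_left _).mul_right _
  -- sum of B over P is -2 * ∑ w
  have sumB : ∑ UV ∈ P, B UV = (-2) * ∑ j ∈ T, w j := by
    have himg : P.filter (fun UV => UV.1 = ∅ ∧ UV.2.card = 1)
        = T.image (fun j => ((∅ : Finset (Fin m)), ({j} : Finset (Fin k)))) := by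
      ext ⟨U, V⟩
      simp only [Finset.mem_filter, hP, Finset.mem_erase, Finset.mem_product,
        Finset.mem_powerset, Finset.mem_image, Prod.mk.injEq]
      constructor
      · rintro ⟨⟨hne, hU, hV⟩, hU0, hV1⟩
        obtain ⟨j, hj⟩ := Finset.card_eq_one.mp hV1
        exact ⟨j, hV (by simp [hj]), hU0.symm, hj.symm⟩
      · rintro ⟨j, hjT, hU0, hV⟩
        exact ⟨⟨by rw [← hV]; simp, by simp [← hU0],
          by simp [← hV, Finset.singleton_subset_iff, hjT]⟩,
          hU0.symm, by simp [← hV]⟩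
    have : ∑ UV ∈ P, B UV
        = ∑ UV ∈ P.filter (fun UV => UV.1 = ∅ ∧ UV.2.card = 1), (-2) * ∑ j ∈ UV.2, w j := by
      rw [Finset.sum_filter]
    rw [this, himg, Finset.sum_image (by intro a _ b _ h; simpa using h)]
    rw [← Finset.mul_sum]
    simp
  -- conclude
  have dvdsum : ((2:ℤ)^(q+1)) ∣
      ∑ UV ∈ P, ((-2:ℤ) ^ (UV.1.card + UV.2.card) * A UV - B UV) :=
    Finset.dvd_sum term
  rw [Finset.sum_sub_distrib, sumB] at dvdsum
  set X := ∑ c, (if Odd ((S.filter (fun i => H i c = 1)).card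
                      + (T.filter (fun j => L j c = 1)).card)
              then (1 : ℤ) else 0) * p c with hX
  have hsf : ∑ UV ∈ P, (-2:ℤ) ^ (UV.1.card + UV.2.card) * A UV = -(2 * X) := by
    linarith [key]
  rw [hsf] at dvdsum
  have heq2 : -(2 * X) - (-2) * ∑ j ∈ T, w j = -(2 * (X - ∑ j ∈ T, w j)) := by ring
  rw [heq2, dvd_neg] at dvdsum
  have hq1 : (2:ℤ)^(q+1) = 2 * 2^q := by rw [pow_succ]; ring
  rw [hq1] at dvdsum
  have hdvd : ((2:ℤ)^q) ∣ (X - ∑ j ∈ T, w j) :=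
    (mul_dvd_mul_iff_left (by norm_num : (2:ℤ) ≠ 0)).mp dvdsum
  exact (Int.modEq_iff_dvd.mpr hdvd).symm
end

section
/- (The Steane code has no transversal T.) Let r₁ = (1,0,0,1,0,1,1), r₂ = (0,1,0,1,1,0,1), r₃ = (0,0,1,0,1,1,1) and l = (1,1,1,1,1,1,1), regarded as 0/1 vectors in ℤ^7, and for u ∈ {0,1}³, v ∈ {0,1} let c(u,v) ∈ {0,1}^7 ⊂ ℤ^7 denote the coordinatewise XOR v·l ⊕ u₁r₁ ⊕ u₂r₂ ⊕ u₃r₃. Then there exist no p : Fin 7 → ℤ and odd integer w such that for all u ∈ {0,1}³ and v ∈ {0,1}, ∑_{c} c(u,v)(c) · p(c) ≡ v·w (mod 8). -/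
set_option maxHeartbeats 2000000 in
/-- **The Steane code has no transversal `T`.**
Bit strings are 0/1 valued integer vectors; the codeword `c(u,v)` is the coordinatewise
XOR `v·l ⊕ u₁r₁ ⊕ u₂r₂ ⊕ u₃r₃` (its coordinate is 1 exactly when an odd number of the
contributing bits are 1).  There is no phase pattern `p : Fin 7 → ℤ` and odd `w` with
`∑_c c(u,v)(c)·p(c) ≡ v·w (mod 8)` for all `u ∈ {0,1}³`, `v ∈ {0,1}`. -/
theorem steane_no_transversal_T :
    ¬ ∃ (p : Fin 7 → ℤ) (w : ℤ), Odd w ∧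
      ∀ (u : Fin 3 → ℤ) (v : ℤ), (∀ i, u i = 0 ∨ u i = 1) → (v = 0 ∨ v = 1) →
        (∑ c, (if Odd (v * (![1,1,1,1,1,1,1] : Fin 7 → ℤ) c
                        + u 0 * (![1,0,0,1,0,1,1] : Fin 7 → ℤ) c
                        + u 1 * (![0,1,0,1,1,0,1] : Fin 7 → ℤ) c
                        + u 2 * (![0,0,1,0,1,1,1] : Fin 7 → ℤ) c)
                then (1 : ℤ) else 0) * p c) ≡ v * w [ZMOD 8] := by
  rintro ⟨p, w, ⟨k, hk⟩, h⟩
  have h1 := h ![1,0,0] 0 (by intro i; fin_cases i <;> norm_num) (Or.inl rfl)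
  have h2 := h ![0,1,0] 0 (by intro i; fin_cases i <;> norm_num) (Or.inl rfl)
  have h3 := h ![0,0,1] 0 (by intro i; fin_cases i <;> norm_num) (Or.inl rfl)
  have h4 := h ![1,1,0] 0 (by intro i; fin_cases i <;> norm_num) (Or.inl rfl)
  have h5 := h ![1,0,1] 0 (by intro i; fin_cases i <;> norm_num) (Or.inl rfl)
  have h6 := h ![0,1,1] 0 (by intro i; fin_cases i <;> norm_num) (Or.inl rfl)
  have h7 := h ![1,1,1] 0 (by intro i; fin_cases i <;> norm_num) (Or.inl rfl)
  have h8 := h ![0,0,0] 1 (by intro i; fin_cases i <;> norm_num) (Or.inr rfl)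
  have el5 : (![1,1,1,1,1,1,1] : Fin 7 → ℤ) 5 = 1 := rfl
  have el6 : (![1,1,1,1,1,1,1] : Fin 7 → ℤ) 6 = 1 := rfl
  have ea5 : (![1,0,0,1,0,1,1] : Fin 7 → ℤ) 5 = 1 := rfl
  have ea6 : (![1,0,0,1,0,1,1] : Fin 7 → ℤ) 6 = 1 := rfl
  have eb5 : (![0,1,0,1,1,0,1] : Fin 7 → ℤ) 5 = 0 := rfl
  have eb6 : (![0,1,0,1,1,0,1] : Fin 7 → ℤ) 6 = 1 := rfl
  have ec5 : (![0,0,1,0,1,1,1] : Fin 7 → ℤ) 5 = 1 := rfl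
  have ec6 : (![0,0,1,0,1,1,1] : Fin 7 → ℤ) 6 = 1 := rfl
  simp only [el5, el6, ea5, ea6, eb5, eb6, ec5, ec6, Fin.sum_univ_seven, Matrix.cons_val_zero, Matrix.cons_val_one, Matrix.head_cons,
    Matrix.cons_val_fin_one, Matrix.cons_val_succ, Int.ModEq] at h1 h2 h3 h4 h5 h6 h7 h8
  norm_num [Int.odd_iff, Matrix.cons_val_two, Matrix.cons_val_three, Matrix.cons_val_four] at h1 h2 h3 h4 h5 h6 h7 h8
  omega
end

section
/- (Circuit identity of Lemma 4: localising a controlled-phase gate.) Let ω ∈ ℂ with ω ≠ 0. Let CNOT : Matrix (Fin 2 × Fin 2) (Fin 2 × Fin 2) ℂ be the controlled-NOT with the first factor as control, let P(ζ) = !![1,0;0,ζ], I₂ the 2×2 identity, ⊗ the Kronecker product of matrices, and CZ(ζ) the diagonal 4×4 matrix which is 1 except for entry ζ at index ((1,1),(1,1)). Then (I₂ ⊗ P(ω)) * CNOT * (I₂ ⊗ P(ω⁻¹)) * CNOT = (P(ω⁻¹) ⊗ I₂) * CZ(ω²). That is, the sequence CNOT, P† on the target, CNOT, P on the target implements a controlled-P²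 gate up to a P† on the control qubit. -/
open Matrix Kronecker

/-- The controlled-NOT gate on two qubits (first factor = control):
`CNOT (a,c) (a',c') = 1` iff `a = a'` and `c = c' + a` (addition in `Fin 2`). -/
def CNOT : Matrix (Fin 2 × Fin 2) (Fin 2 × Fin 2) ℂ :=
  Matrix.of fun p q => if p.1 = q.1 ∧ p.2 = q.2 + p.1 then 1 else 0

/-- The controlled-phase gate `CZ(ζ)`: diagonal, equal to 1 except for the entry `ζ`
at index `((1,1),(1,1))`. -/
def CZ (ζ : ℂ) : Matrix (Fin 2 × Fin 2) (Fin 2 × Fin 2) ℂ :=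
  Matrix.of fun p q => if p = q then (if p = ((1 : Fin 2), (1 : Fin 2)) then ζ else 1) else 0

/-- **Circuit identity of Lemma 4: localising a controlled-phase gate.**
For `ω ≠ 0`, with `P(ζ) = !![1,0;0,ζ]`:
`(I ⊗ P(ω)) · CNOT · (I ⊗ P(ω⁻¹)) · CNOT = (P(ω⁻¹) ⊗ I) · CZ(ω²)`;
the sequence CNOT, `P†` on the target, CNOT, `P` on the target implements a
controlled-`P²` gate up to a `P†` on the control. -/
theorem controlled_phase_localisation (ω : ℂ) (hω : ω ≠ 0) :
    ((1 : Matrix (Fin 2) (Fin 2) ℂ) ⊗ₖ (!![1,0;0,ω] : Matrix (Fin 2) (Fin 2) ℂ)) * CNOT *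
      ((1 : Matrix (Fin 2) (Fin 2) ℂ) ⊗ₖ (!![1,0;0,ω⁻¹] : Matrix (Fin 2) (Fin 2) ℂ)) * CNOT
    = ((!![1,0;0,ω⁻¹] : Matrix (Fin 2) (Fin 2) ℂ) ⊗ₖ (1 : Matrix (Fin 2) (Fin 2) ℂ)) *
        CZ (ω ^ 2) := by
  ext ⟨a,c⟩ ⟨a',c'⟩
  fin_cases a <;> fin_cases c <;> fin_cases a' <;> fin_cases c' <;>
    simp [CNOT, CZ, Matrix.mul_apply, Fintype.sum_prod_type, Fin.sum_univ_two,
      Matrix.one_apply, Prod.ext_iff] <;>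
    field_simp <;> ring
end

section
/- (Parity computation underlying the intra-block controlled-phase lemma.) Let n be a natural number, σ a permutation of Fin n, and r, l₁, l₂ : Fin n → ZMod 2, and set y = r ∘ σ, i.e., y is the image of r under the permutation S_R. Assume: (i) l₂ = l₁ ∘ σ and l₁ = l₂ ∘ σ (σ swaps the two logicals); (ii) l₁ and l₂ have disjoint supports, i.e., l₁ c * l₂ c = 0 for all c; (iii) the cardinalities of {c | y c = 1 ∧ l₂ c = 1}, {c | r c = 1 ∧ l₂ c = 1}, and {c | r c = 1 ∧ y c = 1 ∧ l₂ c = 1} are all even. Then, writing z = r + l₁ + l₂ (sum in (ZMod 2)^n), the cardinality of {c | (z ∘ σ) c = 1 ∧ z c = 1 ∧ l₂ c = 1} is congruent modulo 2 to the cardinality of {c | l₂ c = 1}. (Hence applying controlled-Z gates between the qubit pairs paired by σ inside the support of l₁ ∪ l₂ gives the codeword r ⊕ l₁ ⊕ l₂ the phase (−1)^{|l₂|} while codewords r, r ⊕ l₁, r ⊕ l₂ acquire no phase.) -/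
private lemma zmod2_cases : ∀ a : ZMod 2, a = 0 ∨ a = 1 := by decide

/-- **Parity computation underlying the intra-block controlled-phase lemma.**
`σ` is a qubit permutation carrying codewords to codewords (`y = r ∘ σ`), swapping the
disjointly-supported logicals `l₁, l₂`.  Under the evenness conditions (instances of the
transversal-`T` conditions), the codeword `z = r + l₁ + l₂` satisfies
`|{c | (z∘σ) c = 1 ∧ z c = 1 ∧ l₂ c = 1}| ≡ |{c | l₂ c = 1}| (mod 2)`. -/
theorem intra_block_controlled_phase_parity
    (n : ℕ) (σ : Equiv.Perm (Fin n)) (r l₁ l₂ : Fin n → ZMod 2)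
    (h12 : l₂ = l₁ ∘ σ) (h21 : l₁ = l₂ ∘ σ)
    (hdisj : ∀ c, l₁ c * l₂ c = 0)
    (he1 : Even (Finset.univ.filter (fun c => (r ∘ σ) c = 1 ∧ l₂ c = 1)).card)
    (he2 : Even (Finset.univ.filter (fun c => r c = 1 ∧ l₂ c = 1)).card)
    (he3 : Even (Finset.univ.filter
      (fun c => r c = 1 ∧ (r ∘ σ) c = 1 ∧ l₂ c = 1)).card) :
    (Finset.univ.filter (fun c =>
        ((r + l₁ + l₂) ∘ σ) c = 1 ∧ (r + l₁ + l₂) c = 1 ∧ l₂ c = 1)).card ≡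
      (Finset.univ.filter (fun c => l₂ c = 1)).card [MOD 2] := by
  classical
  set A := Finset.univ.filter (fun c => l₂ c = 1) with hA
  set B := Finset.univ.filter (fun c => r c = 1 ∧ l₂ c = 1) with hB
  set C := Finset.univ.filter (fun c => (r ∘ σ) c = 1 ∧ l₂ c = 1) with hC
  set D := Finset.univ.filter (fun c => r c = 1 ∧ (r ∘ σ) c = 1 ∧ l₂ c = 1) with hD
  set S := Finset.univ.filter (fun c =>
      ((r + l₁ + l₂) ∘ σ) c = 1 ∧ (r + l₁ + l₂) c = 1 ∧ l₂ c = 1) with hS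
  -- Pointwise simplification on the support of l₂
  have hSeq : S = A \ (B ∪ C) := by
    ext c
    simp only [hS, hA, hB, hC, Finset.mem_sdiff, Finset.mem_union, Finset.mem_filter,
      Finset.mem_univ, true_and, Function.comp_apply, Pi.add_apply]
    constructor
    · rintro ⟨hz1, hz2, hl2⟩
      have hl1c : l₁ c = 0 := by
        have := hdisj c; rw [hl2, mul_one] at this; exact this
      have hl1σ : l₁ (σ c) = 1 := by
        have : l₂ c = l₁ (σ c) := congrFun h12 c
        rw [← this, hl2]
      have hl2σ : l₂ (σ c) = 0 := by
        have := hdisj (σ c); rw [hl1σ, one_mul] at this; exact this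
      rw [hl1σ, hl2σ] at hz1
      rw [hl1c, hl2] at hz2
      have hrσ : r (σ c) = 0 := by
        rcases zmod2_cases (r (σ c)) with h | h
        · exact h
        · rw [h] at hz1; exact absurd hz1 (by decide)
      have hrc : r c = 0 := by
        rcases zmod2_cases (r c) with h | h
        · exact h
        · rw [h] at hz2; exact absurd hz2 (by decide)
      refine ⟨hl2, ?_⟩
      push_neg
      constructor
      · intro h; rw [hrc] at h; exact absurd h (by decide)
      · intro h; rw [hrσ] at h; exact absurd h (by decide)
    · rintro ⟨hl2, hne⟩
      push_neg at hne
      have hrc : r c = 0 := by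
        rcases zmod2_cases (r c) with h | h
        · exact h
        · exact absurd hl2 (hne.1 h)
      have hrσ : r (σ c) = 0 := by
        rcases zmod2_cases (r (σ c)) with h | h
        · exact h
        · exact absurd hl2 (hne.2 h)
      have hl1c : l₁ c = 0 := by
        have := hdisj c; rw [hl2, mul_one] at this; exact this
      have hl1σ : l₁ (σ c) = 1 := by
        have : l₂ c = l₁ (σ c) := congrFun h12 c
        rw [← this, hl2]
      have hl2σ : l₂ (σ c) = 0 := by
        have := hdisj (σ c); rw [hl1σ, one_mul] at this; exact this
      refine ⟨?_, ?_, hl2⟩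
      · rw [hrσ, hl1σ, hl2σ]; decide
      · rw [hrc, hl1c, hl2]; decide
  have hDeq : B ∩ C = D := by
    ext c
    simp only [hB, hC, hD, Finset.mem_inter, Finset.mem_filter, Finset.mem_univ, true_and]
    tauto
  have hsub : B ∪ C ⊆ A := by
    intro c hc
    simp only [hB, hC, hA, Finset.mem_union, Finset.mem_filter, Finset.mem_univ, true_and] at *
    tauto
  have hUeven : Even (B ∪ C).card := by
    have h := Finset.card_union_add_card_inter B C
    rw [hDeq] at h
    have : Even ((B ∪ C).card + D.card) := h ▸ he2.add he1
    rcases Nat.even_add.mp this with h'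
    exact h'.mpr he3
  have hcard : S.card + (B ∪ C).card = A.card := by
    rw [hSeq]; exact Finset.card_sdiff_add_card_eq_card hsub
  have hU0 : (B ∪ C).card % 2 = 0 := Nat.even_iff.mp hUeven
  show S.card % 2 = A.card % 2
  omega
end

section
/- (Logical qubit count of the hypergraph product.) Let A be an m_A × n_A matrix and B an m_B × n_B matrix over ZMod 2, with rank A = m_A and rank B = m_B (i.e., Aᵀ and Bᵀ are full rank). Let H_X be the (m_A·n_B) × (n_A·n_B + m_A·m_B) block matrix [A⊗1_{n_B} | 1_{m_A}⊗Bᵀ] and H_Z the (n_A·m_B) × (n_A·n_B + m_A·m_B) block matrix [1_{n_A}⊗B | Aᵀ⊗1_{m_B}], over ZMod 2. Then (n_A·n_B + m_A·m_B) − rank H_X − rank H_Z = (n_A − m_A)·(n_B − m_B). -/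
open Matrix Kronecker

section Aux

variable {F : Type*} [Field F]

lemma aux_surjective_of_rank_eq_card {m n : Type*} [Fintype m] [Fintype n] [DecidableEq n]
    (A : Matrix m n F) (h : A.rank = Fintype.card m) :
    Function.Surjective A.mulVecLin := by
  rw [← LinearMap.range_eq_top]
  apply Submodule.eq_top_of_finrank_eq
  rw [← Matrix.rank, h, Module.finrank_pi]

lemma aux_rank_eq_card_of_surjective {m n : Type*} [Fintype m] [Fintype n] [DecidableEq n]
    (A : Matrix m n F) (h : Function.Surjective A.mulVecLin) :
    A.rank = Fintype.card m := by
  rw [Matrix.rank, LinearMap.range_eq_top.mpr h, finrank_top, Module.finrank_pi]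

lemma aux_surjective_kronecker_one {m n p : Type*} [Fintype m] [Fintype n] [Fintype p]
    [DecidableEq n] [DecidableEq p]
    (A : Matrix m n F) (h : Function.Surjective A.mulVecLin) :
    Function.Surjective (A ⊗ₖ (1 : Matrix p p F)).mulVecLin := by
  intro y
  choose x hx using fun j : p => h (fun i => y (i, j))
  refine ⟨fun q => x q.2 q.1, ?_⟩
  ext ⟨i, j⟩
  have := congrFun (hx j) i
  simp only [Matrix.mulVecLin_apply, Matrix.mulVec, dotProduct] at this ⊢
  rw [← Finset.univ_product_univ, Finset.sum_product]
  simp [Matrix.kronecker_apply, Matrix.one_apply, mul_comm, mul_ite, this]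

lemma aux_surjective_one_kronecker {m n p : Type*} [Fintype m] [Fintype n] [Fintype p]
    [DecidableEq n] [DecidableEq p]
    (B : Matrix m n F) (h : Function.Surjective B.mulVecLin) :
    Function.Surjective ((1 : Matrix p p F) ⊗ₖ B).mulVecLin := by
  intro y
  choose x hx using fun j : p => h (fun i => y (j, i))
  refine ⟨fun q => x q.1 q.2, ?_⟩
  ext ⟨j, i⟩
  have := congrFun (hx j) i
  simp only [Matrix.mulVecLin_apply, Matrix.mulVec, dotProduct] at this ⊢
  rw [← Finset.univ_product_univ, Finset.sum_product]
  simp [Matrix.kronecker_apply, Matrix.one_apply, mul_ite, this]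

lemma aux_surjective_fromColumns_left {m n₁ n₂ : Type*} [Fintype m] [Fintype n₁] [Fintype n₂]
    [DecidableEq n₁] [DecidableEq n₂]
    (M : Matrix m n₁ F) (N : Matrix m n₂ F) (h : Function.Surjective M.mulVecLin) :
    Function.Surjective (Matrix.fromCols M N).mulVecLin := by
  intro y
  obtain ⟨x, hx⟩ := h y
  refine ⟨Sum.elim x 0, ?_⟩
  simp only [Matrix.mulVecLin_apply] at hx ⊢
  rw [Matrix.fromCols_mulVec_sumElim, Matrix.mulVec_zero, add_zero, hx]

end Aux

/-- **Logical qubit count of the hypergraph product.**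
If `Aᵀ` and `Bᵀ` are full rank (`rank A = m_A`, `rank B = m_B`), then the hypergraph
product code on `n_A n_B + m_A m_B` qubits, with `H_X = [A⊗1 | 1⊗Bᵀ]` and
`H_Z = [1⊗B | Aᵀ⊗1]`, encodes `K = N − rank H_X − rank H_Z = (n_A − m_A)(n_B − m_B)`
logical qubits. -/
theorem hypergraph_product_logical_count
    (mA nA mB nB : ℕ)
    (A : Matrix (Fin mA) (Fin nA) (ZMod 2)) (B : Matrix (Fin mB) (Fin nB) (ZMod 2))
    (hA : A.rank = mA) (hB : B.rank = mB) :
    nA * nB + mA * mB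
      - (Matrix.fromCols (A ⊗ₖ (1 : Matrix (Fin nB) (Fin nB) (ZMod 2)))
          ((1 : Matrix (Fin mA) (Fin mA) (ZMod 2)) ⊗ₖ Bᵀ)).rank
      - (Matrix.fromCols ((1 : Matrix (Fin nA) (Fin nA) (ZMod 2)) ⊗ₖ B)
          (Aᵀ ⊗ₖ (1 : Matrix (Fin mB) (Fin mB) (ZMod 2)))).rank
      = (nA - mA) * (nB - mB) := by
  have hAsurj : Function.Surjective A.mulVecLin :=
    aux_surjective_of_rank_eq_card A (by simpa using hA)
  have hBsurj : Function.Surjective B.mulVecLin :=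
    aux_surjective_of_rank_eq_card B (by simpa using hB)
  have hX : (Matrix.fromCols (A ⊗ₖ (1 : Matrix (Fin nB) (Fin nB) (ZMod 2)))
      ((1 : Matrix (Fin mA) (Fin mA) (ZMod 2)) ⊗ₖ Bᵀ)).rank = mA * nB := by
    rw [aux_rank_eq_card_of_surjective _
      (aux_surjective_fromColumns_left _ _ (aux_surjective_kronecker_one A hAsurj))]
    simp
  have hZ : (Matrix.fromCols ((1 : Matrix (Fin nA) (Fin nA) (ZMod 2)) ⊗ₖ B)
      (Aᵀ ⊗ₖ (1 : Matrix (Fin mB) (Fin mB) (ZMod 2)))).rank = nA * mB := by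
    rw [aux_rank_eq_card_of_surjective _
      (aux_surjective_fromColumns_left _ _ (aux_surjective_one_kronecker B hBsurj))]
    simp
  rw [hX, hZ]
  have hmA : mA ≤ nA := hA ▸ A.rank_le_card_width.trans_eq (by simp)
  have hmB : mB ≤ nB := hB ▸ B.rank_le_card_width.trans_eq (by simp)
  obtain ⟨a, rfl⟩ := Nat.exists_eq_add_of_le hmA
  obtain ⟨b, rfl⟩ := Nat.exists_eq_add_of_le hmB
  have : (mA + a) * (mB + b) + mA * mB
      = mA * (mB + b) + ((mA + a) * mB + a * b) := by ring
  rw [this, Nat.add_sub_cancel_left, Nat.add_sub_cancel_left, Nat.add_sub_cancel_left, Nat.add_sub_cancel_left]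
end

section
/- (Balanced product codes are CSS codes.) Let A, R, C be matrices over ZMod 2 with A of size m × n, R of size m × m, C of size n × n, satisfying the symmetry relation R * A = A * Cᵀ. Then the balanced product parity-check matrices H_X = [Aᵀ | 1_n + C] and H_Z = [1_m + R | A] satisfy H_X * H_Zᵀ = 0; equivalently, Aᵀ * (1_m + R)ᵀ + (1_n + C) * Aᵀ = 0 over ZMod 2. -/
open Matrix

/-- **Balanced product codes are CSS codes.**
For `A : m × n`, `R : m × m`, `C : n × n` over `ZMod 2` with the symmetry `R A = A Cᵀ`,
the balanced product parity-check matrices `H_X = [Aᵀ | 1 + C]` and `H_Z = [1 + R | A]`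
satisfy `H_X H_Zᵀ = 0`; equivalently `Aᵀ(1 + R)ᵀ + (1 + C)Aᵀ = 0`. -/
theorem balanced_product_css
    (m n : ℕ) (A : Matrix (Fin m) (Fin n) (ZMod 2))
    (R : Matrix (Fin m) (Fin m) (ZMod 2)) (C : Matrix (Fin n) (Fin n) (ZMod 2))
    (hsym : R * A = A * Cᵀ) :
    Matrix.fromCols Aᵀ (1 + C) * (Matrix.fromCols (1 + R) A)ᵀ = 0 ∧
    Aᵀ * (1 + R)ᵀ + (1 + C) * Aᵀ = 0 := by
  have key : Aᵀ * (1 + R)ᵀ + (1 + C) * Aᵀ = 0 := by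
    have h1 : Aᵀ * Rᵀ = (R * A)ᵀ := (transpose_mul R A).symm
    have h2 : C * Aᵀ = (A * Cᵀ)ᵀ := by simp [transpose_mul]
    rw [transpose_add, transpose_one, Matrix.mul_add, Matrix.add_mul, Matrix.mul_one, Matrix.one_mul,
      h1, h2, hsym, ← two_smul (ZMod 2)]
    ext i j
    simp [Matrix.smul_apply, show ((2:ZMod 2))=0 from rfl]
  refine ⟨?_, key⟩
  rw [transpose_fromCols, fromCols_mul_fromRows, key]
end

section
/- (Distance balancing preserves the CSS condition.) Let H_X, H_Z be matrices over ZMod 2 with n columns each, satisfying H_X * H_Zᵀ = 0, and let H_c be any m_c × n_c matrix over ZMod 2. Define the distance-balanced matrices H̃_X = [H_X⊗1_{n_c} | 1_n⊗H_cᵀ] (one block row) and H̃_Z as the block matrix with rows [H_Z⊗1_{n_c} | 0] and [1_n⊗H_c | H_Xᵀ⊗1_{m_c}]. Then H̃_X * H̃_Zᵀ = 0 over ZMod 2. -/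
open Matrix Kronecker

/-- **Distance balancing preserves the CSS condition.**
Given a CSS pair `H_X, H_Z` (with `H_X H_Zᵀ = 0`) and any classical parity-check `H_c`,
the distance-balanced matrices
`H̃_X = [H_X⊗1 | 1⊗H_cᵀ]` and `H̃_Z = fromBlocks (H_Z⊗1) 0 (1⊗H_c) (H_Xᵀ⊗1)`
satisfy `H̃_X H̃_Zᵀ = 0` over `ZMod 2`. -/
theorem distance_balancing_css
    (n mX mZ mc nc : ℕ)
    (HX : Matrix (Fin mX) (Fin n) (ZMod 2)) (HZ : Matrix (Fin mZ) (Fin n) (ZMod 2))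
    (hCSS : HX * HZᵀ = 0) (Hc : Matrix (Fin mc) (Fin nc) (ZMod 2)) :
    Matrix.fromCols (HX ⊗ₖ (1 : Matrix (Fin nc) (Fin nc) (ZMod 2)))
        ((1 : Matrix (Fin mX) (Fin mX) (ZMod 2)) ⊗ₖ Hcᵀ) *
      (Matrix.fromBlocks (HZ ⊗ₖ (1 : Matrix (Fin nc) (Fin nc) (ZMod 2))) 0
        ((1 : Matrix (Fin n) (Fin n) (ZMod 2)) ⊗ₖ Hc)
        (HXᵀ ⊗ₖ (1 : Matrix (Fin mc) (Fin mc) (ZMod 2))))ᵀ = 0 := by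
  rw [Matrix.fromBlocks_transpose, Matrix.fromCols_mul_fromBlocks]
  simp only [Matrix.transpose_zero, Matrix.mul_zero, add_zero,
    ← Matrix.kroneckerMap_transpose, ← Matrix.mul_kronecker_mul, Matrix.transpose_one,
    Matrix.mul_one, Matrix.one_mul, hCSS, Matrix.zero_kronecker, Matrix.transpose_transpose]
  have : HX ⊗ₖ Hcᵀ + HX ⊗ₖ Hcᵀ = (0 : Matrix _ _ (ZMod 2)) := by
    rw [← two_smul (ZMod 2) (HX ⊗ₖ Hcᵀ)]
    rw [show (2:ZMod 2) = 0 from rfl, zero_smul]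
  rw [this, Matrix.fromCols_zero]
end

section
/- (Validity of the logical operators of the direct construction.) Let k, d, r, s be positive naturals with s odd, and let C₀ be an r × s matrix over ZMod 2 whose rows all have even weight, i.e., C₀ *ᵥ (all-ones vector) = 0. Index the left-block physical qubits by Fin d × Fin k × Fin s and define, for each i ∈ Fin k: L_X i (a,j,c) = if j = i then 1 else 0, and L_Z i (a,j,c) = if (a = 0 ∧ j = i) then 1 else 0. Let M = 1_{d·k} ⊗ C₀ be the left block of H_X (rows indexed by Fin d × Fin k × Fin r, with M (a,j,t) (a',j',c) = if (a,j) = (a',j') then C₀ t c else 0), and let R be the permutation matrix on Fin d × Fin k × Fin s cyclically shifting the Fin d component by one. Then over ZMod 2: (i) L_X * L_Zᵀ = 1_k; (ii) M * L_Zᵀ = 0; (iii) (1 + R) * L_Xᵀ = 0; and (iv) the supports of L_X i for distinct i are disjoint. -/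
open Matrix

/-- **Validity of the logical operators of the direct construction.**
Left-block qubits are indexed by `Fin d × Fin k × Fin s`.  With `L_X i` supported on all
qubits with middle index `i`, `L_Z i` on those with first index `0` and middle index `i`,
`M = 1_{d·k} ⊗ C₀` the left block of `H_X`, and `R` the permutation matrix cyclically
shifting the `Fin d` component, we have over `ZMod 2`:
(i) `L_X L_Zᵀ = 1`; (ii) `M L_Zᵀ = 0`; (iii) `(1 + R) L_Xᵀ = 0`; and
(iv) the supports of the `L_X i` are pairwise disjoint. -/
theorem direct_construction_logicals
    (k d r s : ℕ) (hk : 0 < k) (hd : 0 < d) (hr : 0 < r) (hs : 0 < s) (hsodd : Odd s)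
    (C₀ : Matrix (Fin r) (Fin s) (ZMod 2))
    (hC₀ : C₀ *ᵥ (fun _ => 1) = 0) :
    let LX : Matrix (Fin k) (Fin d × Fin k × Fin s) (ZMod 2) :=
      Matrix.of fun i p => if p.2.1 = i then 1 else 0
    let LZ : Matrix (Fin k) (Fin d × Fin k × Fin s) (ZMod 2) :=
      Matrix.of fun i p => if p.1 = (⟨0, hd⟩ : Fin d) ∧ p.2.1 = i then 1 else 0
    let M : Matrix (Fin d × Fin k × Fin r) (Fin d × Fin k × Fin s) (ZMod 2) :=
      Matrix.of fun t p => if (t.1, t.2.1) = (p.1, p.2.1) then C₀ t.2.2 p.2.2 else 0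
    let R : Matrix (Fin d × Fin k × Fin s) (Fin d × Fin k × Fin s) (ZMod 2) :=
      Matrix.of fun p p' => if p.1 = finRotate d p'.1 ∧ p.2 = p'.2 then 1 else 0
    LX * LZᵀ = 1 ∧
    M * LZᵀ = 0 ∧
    (1 + R) * LXᵀ = 0 ∧
    (∀ i j : Fin k, i ≠ j → ∀ p, LX i p * LX j p = 0) := by
  intro LX LZ M R
  have hs2 : (s : ZMod 2) = 1 := by
    obtain ⟨m, rfl⟩ := hsodd
    have h2 : (2 : ZMod 2) = 0 := rfl
    push_cast
    rw [h2]; ring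
  have hchar : ∀ x : ZMod 2, x + x = 0 := by decide
  refine ⟨?_, ?_, ?_, ?_⟩
  · ext i i'
    by_cases h : i' = i
    · subst h
      simp only [LX, LZ, mul_apply, transpose_apply, of_apply, mul_ite, mul_one, mul_zero,
        ite_and, Fintype.sum_prod_type]
      simp [Finset.sum_ite_eq', Finset.sum_ite_eq, hs2, Matrix.one_apply]
    · have h1 : (1 : Matrix (Fin k) (Fin k) (ZMod 2)) i i' = 0 := by
        simp only [Matrix.one_apply]
        exact if_neg fun hc => h hc.symm
      rw [mul_apply, h1]
      apply Finset.sum_eq_zero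
      intro p _
      simp only [LX, LZ, transpose_apply, of_apply]
      by_cases hp : p.2.1 = i
      · have : ¬(p.1 = (⟨0, hd⟩ : Fin d) ∧ p.2.1 = i') := fun hc => h (hc.2.symm.trans hp)
        simp [this]
      · simp [hp]
  · ext t i
    rw [mul_apply, Matrix.zero_apply]
    by_cases H : t.1 = (⟨0, hd⟩ : Fin d) ∧ t.2.1 = i
    · have hrow : ∑ c : Fin s, C₀ t.2.2 c = 0 := by
        have := congrFun hC₀ t.2.2
        simpa [mulVec, dotProduct] using this
      have hpt : ∀ p : Fin d × Fin k × Fin s, M t p * LZᵀ p i =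
          if p.1 = t.1 then if p.2.1 = t.2.1 then C₀ t.2.2 p.2.2 else 0 else 0 := by
        intro p
        simp only [M, LZ, transpose_apply, of_apply, Prod.mk.injEq, ite_and, H.1, H.2]
        by_cases h1 : p.1 = (⟨0, hd⟩ : Fin d)
        · by_cases h2 : p.2.1 = i
          · simp [h1, h2]
          · simp [h1, h2, fun hc : i = p.2.1 => h2 hc.symm]
        · simp [h1, fun hc : (⟨0, hd⟩ : Fin d) = p.1 => h1 hc.symm]
      rw [Finset.sum_congr rfl fun p _ => hpt p]
      rw [Fintype.sum_prod_type]
      simp [Fintype.sum_prod_type, Finset.sum_ite_irrel, Finset.sum_ite_eq',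
        Finset.sum_ite_eq, hrow]
    · apply Finset.sum_eq_zero
      intro p _
      simp only [M, LZ, transpose_apply, of_apply, Prod.mk.injEq]
      by_cases h1 : t.1 = p.1 <;> by_cases h2 : t.2.1 = p.2.1 <;>
        simp [h1, h2, ite_and] <;>
        exact fun ha hb => absurd ⟨h1.trans ha, h2.trans hb⟩ H
  · ext p i
    rw [Matrix.add_mul, Matrix.one_mul, Matrix.add_apply]
    have hR : (R * LXᵀ) p i = LXᵀ p i := by
      rw [mul_apply]
      rw [Finset.sum_eq_single ((finRotate d).symm p.1, p.2)]
      · simp only [R, of_apply, Equiv.apply_symm_apply]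
        simp [LX]
      · intro q _ hq
        simp only [R, of_apply]
        rw [if_neg, zero_mul]
        rintro ⟨h1, h2⟩
        apply hq
        have : q.1 = (finRotate d).symm p.1 := by
          rw [h1, Equiv.symm_apply_apply]
        exact Prod.ext this h2.symm
      · simp
    rw [hR, hchar, Matrix.zero_apply]
  · intro i j hij p
    simp only [LX, of_apply]
    by_cases h : p.2.1 = i
    · have hj : ¬ p.2.1 = j := fun hc => hij (h.symm.trans hc)
      simp [h, hj, hij]
    · simp [h]
end
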